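/- Let p = 2, so Q(x) = 3/(2·cosh²(x/2)) and φ(x) = tanh(x/2). Then the functions A = −(4/3)·Q and B = −2·φ, together with the constant a = 2/3, solve the first resonance system (Ω_{1,0}): L A + a·(3Q − 2Q²) = 2Q and (L B)' + 3a·Q'' − 3A'' − 2Q·A = 2Q on ℝ. -/

import Mathlib

open Real

/-- The soliton profile for `p = 2`. -/
noncomputable def Q2 (x : ℝ) : ℝ := 3 / (2 * Real.cosh (x / 2) ^ 2)

/-- The linearized operator `L` around `Q` for `p = 2`. -/
noncomputable def Lop2 (w : ℝ → ℝ) (x : ℝ) : ℝ :=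
  -deriv (deriv w) x + w x - 2 * Q2 x * w x

lemma coshsq (x : ℝ) : Real.cosh x ^ 2 = 1 + Real.sinh x ^ 2 := by
  have := Real.cosh_sq_sub_sinh_sq x; nlinarith

lemma tanh_sq (x : ℝ) : Real.tanh (x / 2) ^ 2 = 1 - 2 / 3 * Q2 x := by
  have hc : 0 < Real.cosh (x / 2) := Real.cosh_pos (x / 2)
  rw [Real.tanh_eq_sinh_div_cosh, Q2]
  have h := coshsq (x / 2)
  field_simp
  nlinarith

lemma hQ2 (x : ℝ) : HasDerivAt Q2 (-(Q2 x) * Real.tanh (x / 2)) x := by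
  have hc : 0 < Real.cosh (x / 2) := Real.cosh_pos (x / 2)
  have h1 : HasDerivAt (fun y : ℝ => y / 2) (1 / 2) x := (hasDerivAt_id x).div_const 2
  have h2 : HasDerivAt (fun y => Real.cosh (y / 2)) (Real.sinh (x / 2) * (1 / 2)) x := h1.cosh
  have h3 : HasDerivAt (fun y => 2 * Real.cosh (y / 2) ^ 2)
      (2 * ((2 : ℕ) * Real.cosh (x / 2) ^ 1 * (Real.sinh (x / 2) * (1 / 2)))) x :=
    (h2.pow 2).const_mul 2
  have h4 := (hasDerivAt_const x (3 : ℝ)).div h3 (by positivity)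
  refine h4.congr_deriv ?_
  rw [Q2, Real.tanh_eq_sinh_div_cosh]
  field_simp
  ring

lemma htanh (x : ℝ) : HasDerivAt (fun y => Real.tanh (y / 2)) (Q2 x / 3) x := by
  have hc : 0 < Real.cosh (x / 2) := Real.cosh_pos (x / 2)
  have h1 : HasDerivAt (fun y : ℝ => y / 2) (1 / 2) x := (hasDerivAt_id x).div_const 2
  have hs : HasDerivAt (fun y => Real.sinh (y / 2)) (Real.cosh (x / 2) * (1 / 2)) x := h1.sinh
  have h2 : HasDerivAt (fun y => Real.cosh (y / 2)) (Real.sinh (x / 2) * (1 / 2)) x := h1.cosh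
  have h4 := hs.div h2 (ne_of_gt hc)
  have heq : (fun y => Real.tanh (y / 2)) = fun y => Real.sinh (y / 2) / Real.cosh (y / 2) := by
    funext y; rw [Real.tanh_eq_sinh_div_cosh]
  rw [heq]
  refine h4.congr_deriv ?_
  have h := coshsq (x / 2)
  rw [Q2]
  field_simp
  nlinarith

lemma hQ2' (x : ℝ) : HasDerivAt (deriv Q2) (Q2 x - Q2 x ^ 2) x := by
  have hd : deriv Q2 = fun y => -(Q2 y) * Real.tanh (y / 2) := by
    funext y; exact (hQ2 y).deriv
  rw [hd]
  have h := ((hQ2 x).neg.mul (htanh x))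
  refine h.congr_deriv ?_
  have ht := tanh_sq x
  simp only [Pi.neg_apply]
  nlinarith [ht]

lemma derivQ2_eq (x : ℝ) : deriv Q2 x = -(Q2 x) * Real.tanh (x / 2) := (hQ2 x).deriv

lemma derivderivQ2_eq (x : ℝ) : deriv (deriv Q2) x = Q2 x - Q2 x ^ 2 := (hQ2' x).deriv

lemma hA (x : ℝ) : HasDerivAt (fun y => -(4 / 3) * Q2 y) (-(4 / 3) * (-(Q2 x) * Real.tanh (x / 2))) x :=
  (hQ2 x).const_mul _

lemma derivA_eq : deriv (fun y => -(4 / 3 : ℝ) * Q2 y) = fun y => -(4 / 3) * (-(Q2 y) * Real.tanh (y / 2)) := by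
  funext y; exact (hA y).deriv

lemma derivderivA_eq (x : ℝ) :
    deriv (deriv (fun y => -(4 / 3 : ℝ) * Q2 y)) x = -(4 / 3) * (Q2 x - Q2 x ^ 2) := by
  rw [derivA_eq]
  have h : HasDerivAt (fun y => -(4 / 3 : ℝ) * (-(Q2 y) * Real.tanh (y / 2)))
      (-(4 / 3) * (Q2 x - Q2 x ^ 2)) x := by
    have hd : (fun y => -(4 / 3 : ℝ) * (-(Q2 y) * Real.tanh (y / 2))) = fun y => -(4 / 3) * deriv Q2 y := by
      funext y; rw [derivQ2_eq]
    rw [hd]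
    exact (hQ2' x).const_mul _
  exact h.deriv

lemma derivB_eq : deriv (fun y => -2 * Real.tanh (y / 2)) = fun y => -(2 / 3 : ℝ) * Q2 y := by
  funext y
  have h : HasDerivAt (fun y => -2 * Real.tanh (y / 2)) (-2 * (Q2 y / 3)) y := (htanh y).const_mul _
  rw [h.deriv]; ring

lemma derivderivB_eq (x : ℝ) :
    deriv (deriv (fun y => -2 * Real.tanh (y / 2))) x = 2 / 3 * Q2 x * Real.tanh (x / 2) := by
  rw [derivB_eq]
  have h : HasDerivAt (fun y => -(2 / 3 : ℝ) * Q2 y) (-(2 / 3) * (-(Q2 x) * Real.tanh (x / 2))) x :=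
    (hQ2 x).const_mul _
  rw [h.deriv]; ring

lemma LopB_eq : Lop2 (fun y => -2 * Real.tanh (y / 2)) =
    fun x => -(2 / 3) * (Q2 x * Real.tanh (x / 2)) + -2 * Real.tanh (x / 2)
      - 2 * Q2 x * (-2 * Real.tanh (x / 2)) := by
  funext x
  rw [Lop2, derivderivB_eq]
  ring

lemma derivLopB (x : ℝ) : deriv (Lop2 (fun y => -2 * Real.tanh (y / 2))) x =
    -(2 / 3) * ((-(Q2 x) * Real.tanh (x / 2)) * Real.tanh (x / 2) + Q2 x * (Q2 x / 3))
      + -2 * (Q2 x / 3)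
      - (2 * (-(Q2 x) * Real.tanh (x / 2)) * (-2 * Real.tanh (x / 2))
         + 2 * Q2 x * (-2 * (Q2 x / 3))) := by
  rw [LopB_eq]
  have h1 : HasDerivAt (fun y => Q2 y * Real.tanh (y / 2))
      ((-(Q2 x) * Real.tanh (x / 2)) * Real.tanh (x / 2) + Q2 x * (Q2 x / 3)) x :=
    (hQ2 x).mul (htanh x)
  have h2 : HasDerivAt (fun y => -2 * Real.tanh (y / 2)) (-2 * (Q2 x / 3)) x := (htanh x).const_mul _
  have h3 : HasDerivAt (fun y => 2 * Q2 y) (2 * (-(Q2 x) * Real.tanh (x / 2))) x := (hQ2 x).const_mul _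
  exact (((h1.const_mul (-(2 / 3) : ℝ)).add h2).sub (h3.mul h2)).deriv

theorem first_system_p2 :
    (∀ x : ℝ,
      Lop2 (fun y => -(4 / 3) * Q2 y) x + 2 / 3 * (3 * Q2 x - 2 * Q2 x ^ 2) = 2 * Q2 x) ∧
    (∀ x : ℝ,
      deriv (Lop2 (fun y => -2 * Real.tanh (y / 2))) x
        + 3 * (2 / 3) * deriv (deriv Q2) x
        - 3 * deriv (deriv (fun y => -(4 / 3) * Q2 y)) x
        - 2 * Q2 x * (-(4 / 3) * Q2 x) = 2 * Q2 x) := by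
  constructor
  · intro x
    rw [Lop2, derivderivA_eq]
    ring
  · intro x
    rw [derivLopB, derivderivQ2_eq, derivderivA_eq]
    have ht := tanh_sq x
    nlinarith [ht]
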